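/- Fix a double partition (μ,λ), and for n ≥ 0 and i ≥ 0 let β_i(n) ∈ ℚ be the coefficient of z^i in g_n(μ,λ) · ∏_{k=1}^n (1-z^{2k}). Then for every i ≥ 0 the sequence n ↦ β_i(n) converges (indeed is eventually constant), and Σ_{i≥0} (lim_{n→∞} β_i(n)) z^i = (1/(v_μ v_λ)) · ∏_{r≥1} (1-z^r)^{-n_r(μ)} · ∏_{r≥1} (1+z^r)^{-n_r(λ)} as an identity in ℚ[[z]]. -/

import Mathlib

open Finset PowerSeries Filter

/-- `v_μ = ∏_{r≥1} n_r(μ)! · (2r)^{n_r(μ)}`. -/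
def vOf (mu : Multiset ℕ) : ℕ :=
  ∏ r ∈ mu.toFinset, Nat.factorial (mu.count r) * (2 * r) ^ (mu.count r)

/-- `binom(ν,μ) = ∏_{r≥1} C(n_r(ν), n_r(μ))`. -/
def binomOf (nu mu : Multiset ℕ) : ℕ :=
  ∏ r ∈ mu.toFinset, Nat.choose (nu.count r) (mu.count r)

/-- `∏_{r≥1} (1-z^r)^{-n_r(ν)} ∈ ℚ[[z]]`. -/
noncomputable def facMinus (nu : Multiset ℕ) : PowerSeries ℚ :=
  ∏ r ∈ nu.toFinset, ((1 - (PowerSeries.X : PowerSeries ℚ) ^ r)⁻¹) ^ (nu.count r)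

/-- `∏_{r≥1} (1+z^r)^{-n_r(κ)} ∈ ℚ[[z]]`. -/
noncomputable def facPlus (ka : Multiset ℕ) : PowerSeries ℚ :=
  ∏ r ∈ ka.toFinset, ((1 + (PowerSeries.X : PowerSeries ℚ) ^ r)⁻¹) ^ (ka.count r)

/-- `g_n(μ,λ) ∈ ℚ[[z]]`; the sum over double partitions of `n` is realized as a sum over
`k ≤ n`, `ν ⊢ k`, `κ ⊢ n - k`. -/
noncomputable def gSer (muP lamP : Multiset ℕ) (n : ℕ) : PowerSeries ℚ :=
  ∑ k ∈ Finset.range (n + 1), ∑ nu : Nat.Partition k, ∑ ka : Nat.Partition (n - k),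
    PowerSeries.C
        (((binomOf nu.parts muP : ℚ) * (binomOf ka.parts lamP : ℚ)) /
          ((vOf nu.parts : ℚ) * (vOf ka.parts : ℚ))) *
      facMinus nu.parts * facPlus ka.parts

/-- the twisted Betti number `β_i(n)`: the coefficient of `z^i` in
`g_n(μ,λ) · ∏_{k=1}^n (1-z^{2k})`. -/
noncomputable def betaC (muP lamP : Multiset ℕ) (i n : ℕ) : ℚ :=
  PowerSeries.coeff i
    (gSer muP lamP n * ∏ k ∈ Finset.Icc 1 n, (1 - (PowerSeries.X : PowerSeries ℚ) ^ (2 * k)))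

lemma prod_count_subset {M : Type*} [CommMonoid M] (s : Multiset ℕ) (t : Finset ℕ)
    (h : s.toFinset ⊆ t) (f : ℕ → ℕ → M) (h0 : ∀ r, f 0 r = 1) :
    ∏ r ∈ t, f (s.count r) r = ∏ r ∈ s.toFinset, f (s.count r) r :=
  (Finset.prod_subset h (fun x _ hx => by
    rw [Multiset.count_eq_zero_of_notMem (fun hm => hx (Multiset.mem_toFinset.2 hm)), h0])).symm

lemma vOf_cons (a : ℕ) (s : Multiset ℕ) :
    vOf (a ::ₘ s) = (2 * a) * (s.count a + 1) * vOf s := by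
  classical
  set f : ℕ → ℕ → ℕ := fun c r => Nat.factorial c * (2 * r) ^ c with hf
  have h0 : ∀ r, f 0 r = 1 := by intro r; simp [hf]
  have hsub : s.toFinset ⊆ (a ::ₘ s).toFinset := by
    rw [Multiset.toFinset_cons]; exact Finset.subset_insert _ _
  have ha : a ∈ (a ::ₘ s).toFinset := by
    rw [Multiset.toFinset_cons]; exact Finset.mem_insert_self _ _
  have h1 : vOf (a ::ₘ s) = ∏ r ∈ (a ::ₘ s).toFinset, f ((a ::ₘ s).count r) r := rfl
  have h2 : vOf s = ∏ r ∈ (a ::ₘ s).toFinset, f (s.count r) r := by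
    rw [prod_count_subset s _ hsub f h0]; rfl
  rw [h1, h2, ← Finset.mul_prod_erase _ _ ha, ← Finset.mul_prod_erase _ _ ha]
  have hco : ∀ r ∈ ((a ::ₘ s).toFinset).erase a,
      f ((a ::ₘ s).count r) r = f (s.count r) r := by
    intro r hr
    rw [Multiset.count_cons_of_ne (Finset.ne_of_mem_erase hr) ]
  rw [Finset.prod_congr rfl hco, Multiset.count_cons_self]
  have : f (s.count a + 1) a = (2 * a) * (s.count a + 1) * f (s.count a) a := by
    simp only [hf, Nat.factorial_succ, pow_succ]
    ring
  rw [this, mul_assoc]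

noncomputable def pm (g : ℕ → PowerSeries ℚ) (s : Multiset ℕ) : PowerSeries ℚ :=
  (s.map g).prod

noncomputable def gm : ℕ → PowerSeries ℚ := fun r => (1 - (PowerSeries.X : PowerSeries ℚ) ^ r)⁻¹

noncomputable def gp : ℕ → PowerSeries ℚ := fun r => (1 + (PowerSeries.X : PowerSeries ℚ) ^ r)⁻¹

lemma pm_zero (g) : pm g 0 = 1 := by simp [pm]

lemma pm_add (g) (s t : Multiset ℕ) : pm g (s + t) = pm g s * pm g t := by
  simp [pm]

lemma pm_cons (g) (a) (s : Multiset ℕ) : pm g (a ::ₘ s) = g a * pm g s := by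
  simp [pm]

lemma vOf_zero : vOf 0 = 1 := by simp [vOf]

lemma vOf_pos (s : Multiset ℕ) (hs : ∀ x ∈ s, 0 < x) : 0 < vOf s := by
  induction s using Multiset.induction with
  | empty => simp [vOf_zero]
  | cons a s ih =>
      rw [vOf_cons]
      have ha : 0 < a := hs a (Multiset.mem_cons_self a s)
      have := ih (fun x hx => hs x (Multiset.mem_cons_of_mem hx))
      positivity

lemma binom_mul_vOf (m p : Multiset ℕ) :
    binomOf (m + p) m * (vOf m * vOf p) = vOf (m + p) := by
  classical
  set T := (m + p).toFinset with hT
  have hmT : m.toFinset ⊆ T := by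
    rw [hT, Multiset.toFinset_add]; exact Finset.subset_union_left
  have hpT : p.toFinset ⊆ T := by
    rw [hT, Multiset.toFinset_add]; exact Finset.subset_union_right
  have hb : binomOf (m + p) m = ∏ r ∈ T, Nat.choose ((m + p).count r) (m.count r) := by
    rw [binomOf, ← prod_count_subset m T hmT (fun c r => Nat.choose ((m+p).count r) c)
      (fun r => Nat.choose_zero_right _)]
  have hvm : vOf m = ∏ r ∈ T, Nat.factorial (m.count r) * (2 * r) ^ (m.count r) := by
    rw [vOf, ← prod_count_subset m T hmT (fun c r => Nat.factorial c * (2 * r) ^ c)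
      (fun r => by simp)]
  have hvp : vOf p = ∏ r ∈ T, Nat.factorial (p.count r) * (2 * r) ^ (p.count r) := by
    rw [vOf, ← prod_count_subset p T hpT (fun c r => Nat.factorial c * (2 * r) ^ c)
      (fun r => by simp)]
  have hv : vOf (m + p) = ∏ r ∈ T, Nat.factorial ((m+p).count r) * (2 * r) ^ ((m+p).count r) :=
    rfl
  rw [hb, hvm, hvp, hv, ← Finset.prod_mul_distrib, ← Finset.prod_mul_distrib]
  refine Finset.prod_congr rfl (fun r _ => ?_)
  rw [Multiset.count_add]
  set a := m.count r; set b := p.count r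
  have key : Nat.choose (a + b) a * Nat.factorial a * Nat.factorial b = Nat.factorial (a + b) := by
    have := Nat.choose_mul_factorial_mul_factorial (Nat.le_add_right a b)
    rwa [Nat.add_sub_cancel_left] at this
  calc Nat.choose (a+b) a * (Nat.factorial a * (2*r)^a * (Nat.factorial b * (2*r)^b))
      = (Nat.choose (a+b) a * Nat.factorial a * Nat.factorial b) * ((2*r)^a * (2*r)^b) := by ring
    _ = Nat.factorial (a+b) * (2*r)^(a+b) := by rw [key, pow_add]

noncomputable def SW (g : ℕ → PowerSeries ℚ) (k : ℕ) : PowerSeries ℚ :=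
  ∑ ν : Nat.Partition k, PowerSeries.C ((vOf ν.parts : ℚ)⁻¹) * pm g ν.parts

/-- erase a part `r` from a partition of `k` -/

def erasePart {k : ℕ} (r : ℕ) (ν : Nat.Partition k) (h : r ∈ ν.parts) :
    Nat.Partition (k - r) where
  parts := ν.parts.erase r
  parts_pos := fun hx => ν.parts_pos (Multiset.mem_of_mem_erase hx)
  parts_sum := by
    have h1 : r ::ₘ ν.parts.erase r = ν.parts := Multiset.cons_erase h
    have h2 : r + (ν.parts.erase r).sum = k := by
      have := ν.parts_sum
      rw [← h1, Multiset.sum_cons] at this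
      exact this
    omega

/-- add a part `r` to a partition of `k - r` -/

def consPart {k : ℕ} (r : ℕ) (hr : 0 < r) (hrk : r ≤ k) (ρ : Nat.Partition (k - r)) :
    Nat.Partition k where
  parts := r ::ₘ ρ.parts
  parts_pos := fun hx => by
    rcases Multiset.mem_cons.1 hx with h | h
    · exact h ▸ hr
    · exact ρ.parts_pos h
  parts_sum := by rw [Multiset.sum_cons, ρ.parts_sum]; omega

lemma SW_remove (g : ℕ → PowerSeries ℚ) (r k : ℕ) (hr : 0 < r) (hrk : r ≤ k) :
    ∑ ν : Nat.Partition k,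
      PowerSeries.C ((ν.parts.count r : ℚ) * (vOf ν.parts : ℚ)⁻¹) * pm g ν.parts
    = PowerSeries.C ((2 * r : ℚ))⁻¹ * g r * SW g (k - r) := by
  classical
  rw [SW, Finset.mul_sum]
  rw [← Finset.sum_filter_of_ne (p := fun ν : Nat.Partition k => r ∈ ν.parts)
    (fun ν _ hne => by
      by_contra hmem
      apply hne
      rw [Multiset.count_eq_zero_of_notMem hmem]
      simp)]
  refine Finset.sum_bij' (fun ν hν => erasePart r ν (by simpa using hν))
    (fun ρ _ => consPart r hr hrk ρ) ?_ ?_ ?_ ?_ ?_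
  · intro ν hν; exact Finset.mem_univ _
  · intro ρ hρ
    simp only [Finset.mem_filter, Finset.mem_univ, true_and, consPart]
    exact Multiset.mem_cons_self _ _
  · intro ν hν
    apply Nat.Partition.ext
    simp only [consPart, erasePart]
    exact Multiset.cons_erase (by simpa using hν)
  · intro ρ hρ
    apply Nat.Partition.ext
    simp only [consPart, erasePart]
    exact Multiset.erase_cons_head _ _
  · intro ν hν
    have hmem : r ∈ ν.parts := by simpa using hν
    set s := ν.parts.erase r with hs
    have hps : ν.parts = r ::ₘ s := (Multiset.cons_erase hmem).symm
    have hcount : ν.parts.count r = s.count r + 1 := by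
      rw [hps, Multiset.count_cons_self]
    have hv : vOf ν.parts = (2 * r) * (s.count r + 1) * vOf s := by
      rw [hps, vOf_cons]
    have hvs : (0:ℚ) < vOf s := by
      exact_mod_cast vOf_pos s (fun x hx => ν.parts_pos (Multiset.mem_of_mem_erase hx))
    have hpm : pm g ν.parts = g r * pm g s := by rw [hps, pm_cons]
    have hrat : ((ν.parts.count r : ℚ)) * ((vOf ν.parts : ℚ))⁻¹
        = ((2 * r : ℚ))⁻¹ * ((vOf s : ℚ))⁻¹ := by
      rw [hcount, hv]
      push_cast
      have h2r : (2 * (r:ℚ)) ≠ 0 := by positivity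
      have hc1 : ((s.count r : ℚ) + 1) ≠ 0 := by positivity
      field_simp
    rw [hrat, hpm]
    simp only [erasePart, ← hs]
    rw [map_mul]
    ring

lemma sum_count_mul (n : ℕ) (s : Multiset ℕ) (h : ∀ x ∈ s, 0 < x ∧ x ≤ n) :
    ∑ r ∈ Finset.Icc 1 n, r * s.count r = s.sum := by
  classical
  induction s using Multiset.induction with
  | empty => simp
  | cons a s ih =>
      have ha := h a (Multiset.mem_cons_self a s)
      have hmem : a ∈ Finset.Icc 1 n := Finset.mem_Icc.2 ⟨ha.1, ha.2⟩
      have ih' := ih (fun x hx => h x (Multiset.mem_cons_of_mem hx))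
      rw [Multiset.sum_cons, ← ih']
      have hterm : ∀ r ∈ Finset.Icc 1 n, r * Multiset.count r (a ::ₘ s)
          = (if r = a then a else 0) + r * Multiset.count r s := by
        intro r _
        rw [Multiset.count_cons]
        by_cases hra : r = a <;> simp [hra] <;> ring
      rw [Finset.sum_congr rfl hterm, Finset.sum_add_distrib,
        Finset.sum_ite_eq' (Finset.Icc 1 n) a (fun _ => a), if_pos hmem]

lemma SW_rec (g : ℕ → PowerSeries ℚ) (k : ℕ) :
    PowerSeries.C (k : ℚ) * SW g k
    = ∑ r ∈ Finset.Icc 1 k, PowerSeries.C ((2:ℚ))⁻¹ * g r * SW g (k - r) := by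
  classical
  have lhs : PowerSeries.C (k : ℚ) * SW g k
      = ∑ r ∈ Finset.Icc 1 k, ∑ ν : Nat.Partition k,
          PowerSeries.C ((r : ℚ) * ((ν.parts.count r : ℚ) * (vOf ν.parts : ℚ)⁻¹))
            * pm g ν.parts := by
    rw [SW, Finset.mul_sum, Finset.sum_comm]
    refine Finset.sum_congr rfl (fun ν _ => ?_)
    have hk : ∑ r ∈ Finset.Icc 1 k, r * ν.parts.count r = k := by
      rw [sum_count_mul k ν.parts
        (fun x hx => ⟨ν.parts_pos hx, (Multiset.le_sum_of_mem hx).trans_eq ν.parts_sum⟩),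
        ν.parts_sum]
    have hq : (PowerSeries.C) (k : ℚ)
        = ∑ r ∈ Finset.Icc 1 k, PowerSeries.C ((r : ℚ) * (ν.parts.count r : ℚ)) := by
      rw [← map_sum]
      congr 1
      exact_mod_cast congrArg (Nat.cast (R := ℚ)) hk.symm
    rw [hq, Finset.sum_mul]
    refine Finset.sum_congr rfl (fun r _ => ?_)
    rw [map_mul, map_mul, map_mul]
    ring
  rw [lhs]
  refine Finset.sum_congr rfl (fun r hr => ?_)
  obtain ⟨hr1, hr2⟩ := Finset.mem_Icc.1 hr
  have : ∀ ν : Nat.Partition k,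
      PowerSeries.C ((r : ℚ) * ((ν.parts.count r : ℚ) * (vOf ν.parts : ℚ)⁻¹)) * pm g ν.parts
      = PowerSeries.C (r : ℚ)
        * (PowerSeries.C ((ν.parts.count r : ℚ) * (vOf ν.parts : ℚ)⁻¹) * pm g ν.parts) := by
    intro ν; rw [map_mul]; ring
  rw [Finset.sum_congr rfl (fun ν _ => this ν), ← Finset.mul_sum, SW_remove g r k hr1 hr2]
  have : (PowerSeries.C) (r:ℚ) * (PowerSeries.C) ((2 * r : ℚ))⁻¹
      = PowerSeries.C ((2:ℚ))⁻¹ := by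
    rw [← map_mul]
    congr 1
    have : (r : ℚ) ≠ 0 := by positivity
    field_simp
  have h2 : (PowerSeries.C) (r:ℚ) * ((PowerSeries.C) ((2 * r : ℚ))⁻¹ * g r * SW g (k - r))
      = ((PowerSeries.C) (r:ℚ) * (PowerSeries.C) ((2 * r : ℚ))⁻¹) * (g r * SW g (k - r)) := by
    ring
  rw [h2, this]
  ring

noncomputable def cinv (r : ℕ) : PowerSeries ℚ := (1 - (PowerSeries.X : PowerSeries ℚ) ^ (2*r))⁻¹

lemma const_one_sub (r : ℕ) (hr : 0 < r) :
    constantCoeff (1 - (PowerSeries.X : PowerSeries ℚ) ^ (2*r)) = 1 := by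
  rw [map_sub, map_one, map_pow, constantCoeff_X, zero_pow (by omega : 2*r ≠ 0), sub_zero]

lemma cinv_mul (r : ℕ) (hr : 0 < r) :
    cinv r * (1 - (PowerSeries.X : PowerSeries ℚ) ^ (2*r)) = 1 :=
  PowerSeries.inv_mul_cancel _ (by rw [const_one_sub r hr]; exact one_ne_zero)

lemma cinv_mul_pow (r : ℕ) (hr : 0 < r) :
    cinv r * (PowerSeries.X : PowerSeries ℚ) ^ (2*r) = cinv r - 1 := by
  have h := cinv_mul r hr
  rw [mul_sub, mul_one] at h
  linear_combination -h

noncomputable def Pq (a b : ℕ) : PowerSeries ℚ :=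
  ∏ k ∈ Finset.Ioc a b, (1 - (PowerSeries.X : PowerSeries ℚ) ^ (2*k))

lemma qid (m : ℕ) :
    ∑ r ∈ Finset.Icc 1 m, cinv r * Pq (m - r) m = PowerSeries.C (m : ℚ) := by
  induction m with
  | zero => simp
  | succ m ih =>
      have hsplit : ∀ r ∈ Finset.Icc 1 (m+1),
          cinv r * Pq (m + 1 - r) (m + 1)
          = Pq (m + 1 - r) m
            + (cinv r - 1) * ((1 - (PowerSeries.X : PowerSeries ℚ)^(2*(m+1-r))) * Pq (m+1-r) m) := by
        intro r hr
        obtain ⟨hr1, hr2⟩ := Finset.mem_Icc.1 hr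
        have hPq : Pq (m+1-r) (m+1) = Pq (m+1-r) m * (1 - (PowerSeries.X : PowerSeries ℚ)^(2*(m+1))) := by
          rw [Pq, Pq, Finset.prod_Ioc_succ_top (by omega)]
        have hdec : (1 - (PowerSeries.X : PowerSeries ℚ)^(2*(m+1)))
            = (1 - X^(2*r)) + X^(2*r) * (1 - X^(2*(m+1-r))) := by
          have hexp : 2*r + 2*(m+1-r) = 2*(m+1) := by omega
          rw [mul_sub, mul_one, ← pow_add, hexp]
          ring
        rw [hPq, hdec]
        have h1 := cinv_mul r hr1
        have h2 := cinv_mul_pow r hr1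
        calc cinv r * (Pq (m+1-r) m * ((1 - X^(2*r)) + X^(2*r) * (1 - X^(2*(m+1-r)))))
            = (cinv r * (1 - X^(2*r))) * Pq (m+1-r) m
              + (cinv r * X^(2*r)) * ((1 - X^(2*(m+1-r))) * Pq (m+1-r) m) := by ring
          _ = _ := by rw [h1, h2]; ring
      rw [Finset.sum_congr rfl hsplit, Finset.sum_add_distrib]
      -- second sum
      have hA : ∀ r ∈ Finset.Icc 1 m,
          (1 - (PowerSeries.X : PowerSeries ℚ)^(2*(m+1-r))) * Pq (m+1-r) m = Pq (m-r) m := by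
        intro r hr
        obtain ⟨hr1, hr2⟩ := Finset.mem_Icc.1 hr
        have hstep : m - r ≤ m + 1 - r := by omega
        have h2 : m + 1 - r ≤ m := by omega
        rw [Pq, Pq, ← Finset.prod_Ioc_consecutive _ hstep h2]
        have hsingle : Finset.Ioc (m - r) (m + 1 - r) = {m + 1 - r} := by
          rw [show m + 1 - r = (m - r) + 1 by omega]
          exact Nat.Ioc_succ_singleton (m - r)
        rw [hsingle, Finset.prod_singleton]
      have hsum2 : ∑ r ∈ Finset.Icc 1 (m+1),
          (cinv r - 1) * ((1 - (PowerSeries.X : PowerSeries ℚ)^(2*(m+1-r))) * Pq (m+1-r) m)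
          = PowerSeries.C (m:ℚ) - ∑ r ∈ Finset.Icc 1 m, Pq (m-r) m := by
        rw [Finset.sum_Icc_succ_top (by omega : 1 ≤ m+1)]
        have hz : m + 1 - (m+1) = 0 := by omega
        rw [hz]
        simp only [mul_zero, pow_zero, sub_self, zero_mul, mul_zero, add_zero]
        rw [Finset.sum_congr rfl (fun r hr => by rw [hA r hr])]
        rw [Finset.sum_congr rfl (fun r (hr : r ∈ Finset.Icc 1 m) => (sub_mul (cinv r) 1 (Pq (m-r) m)))]
        rw [Finset.sum_sub_distrib, ih]
        simp
      rw [hsum2]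
      -- first sum
      have hsum1 : ∑ r ∈ Finset.Icc 1 (m+1), Pq (m + 1 - r) m
          = 1 + ∑ r ∈ Finset.Icc 1 m, Pq (m - r) m := by
        rw [← Finset.Ico_add_one_right_eq_Icc, Finset.sum_Ico_eq_sum_range, ← Finset.Ico_add_one_right_eq_Icc,
          Finset.sum_Ico_eq_sum_range]
        rw [show m + 1 + 1 - 1 = m + 1 by omega, Finset.sum_range_succ']
        have h0 : Pq (m + 1 - (1 + 0)) m = 1 := by
          rw [Pq, show m + 1 - (1+0) = m by omega, Finset.Ioc_self, Finset.prod_empty]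
        rw [h0]
        rw [show m + 1 - 1 = m by omega]
        rw [add_comm]
        congr 1
        refine Finset.sum_congr rfl (fun i _ => ?_)
        rw [show m + 1 - (1 + (i+1)) = m - (1+i) by omega]
      rw [hsum1]
      push_cast
      rw [map_add, map_one]
      ring

lemma const_one_sub_pow (r : ℕ) (hr : 0 < r) :
    constantCoeff (1 - (PowerSeries.X : PowerSeries ℚ) ^ r) = 1 := by
  rw [map_sub, map_one, map_pow, constantCoeff_X, zero_pow (by omega : r ≠ 0), sub_zero]

lemma const_one_add_pow (r : ℕ) (hr : 0 < r) :
    constantCoeff (1 + (PowerSeries.X : PowerSeries ℚ) ^ r) = 1 := by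
  rw [map_add, map_one, map_pow, constantCoeff_X, zero_pow (by omega : r ≠ 0), add_zero]

lemma gm_add_gp (r : ℕ) (hr : 0 < r) : gm r + gp r = 2 * cinv r := by
  set a : PowerSeries ℚ := 1 - X ^ r
  set b : PowerSeries ℚ := 1 + X ^ r
  have hab : a * b = 1 - X ^ (2*r) := by
    simp only [a, b]
    rw [two_mul, pow_add]
    ring
  have hca : constantCoeff a ≠ 0 := by rw [const_one_sub_pow r hr]; norm_num
  have hcb : constantCoeff b ≠ 0 := by rw [const_one_add_pow r hr]; norm_num
  have hcab : constantCoeff (1 - (PowerSeries.X : PowerSeries ℚ) ^ (2*r)) ≠ 0 := by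
    rw [const_one_sub_pow (2*r) (by omega)]; norm_num
  have hcab' : constantCoeff (a * b) ≠ 0 := by rw [hab]; exact hcab
  have key : (gm r + gp r) * (a * b) = 2 := by
    have ha' : gm r * a = 1 := PowerSeries.inv_mul_cancel a hca
    have hb' : gp r * b = 1 := PowerSeries.inv_mul_cancel b hcb
    calc (gm r + gp r) * (a * b) = (gm r * a) * b + (gp r * b) * a := by ring
      _ = b + a := by rw [ha', hb', one_mul, one_mul]
      _ = 2 := by simp only [a, b]; ring
  have habinv : (a * b) * (a * b)⁻¹ = 1 := PowerSeries.mul_inv_cancel _ hcab'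
  calc gm r + gp r = (gm r + gp r) * ((a * b) * (a * b)⁻¹) := by rw [habinv, mul_one]
    _ = ((gm r + gp r) * (a * b)) * (a * b)⁻¹ := by ring
    _ = 2 * (a * b)⁻¹ := by rw [key]
    _ = 2 * cinv r := by rw [hab, cinv]

lemma double_reindex (f : ℕ → ℕ → PowerSeries ℚ) (m : ℕ) :
    ∑ k ∈ Finset.range (m+1), ∑ r ∈ Finset.Icc 1 k, f r (k - r)
    = ∑ r ∈ Finset.Icc 1 m, ∑ j ∈ Finset.range (m - r + 1), f r j := by
  classical
  have h1 : ∀ k ∈ Finset.range (m+1),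
      ∑ r ∈ Finset.Icc 1 k, f r (k - r)
      = ∑ r ∈ Finset.Icc 1 m, if r ≤ k then f r (k - r) else 0 := by
    intro k hk
    rw [← Finset.sum_filter]
    congr 1
    ext r
    simp only [Finset.mem_filter, Finset.mem_Icc, Finset.mem_range] at *
    omega
  rw [Finset.sum_congr rfl h1, Finset.sum_comm]
  refine Finset.sum_congr rfl (fun r hr => ?_)
  obtain ⟨hr1, hr2⟩ := Finset.mem_Icc.1 hr
  rw [← Finset.sum_filter]
  have h2 : (Finset.range (m+1)).filter (fun k => r ≤ k) = Finset.Ico r (m+1) := by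
    ext k
    simp only [Finset.mem_filter, Finset.mem_range, Finset.mem_Ico]
    omega
  rw [h2, Finset.sum_Ico_eq_sum_range]
  rw [show m + 1 - r = m - r + 1 by omega]
  refine Finset.sum_congr rfl (fun j _ => ?_)
  rw [Nat.add_sub_cancel_left]

noncomputable def Gd (m : ℕ) : PowerSeries ℚ :=
  ∑ k ∈ Finset.range (m+1), SW gm k * SW gp (m - k)

lemma Gd_reflect (m : ℕ) : Gd m = ∑ k ∈ Finset.range (m+1), SW gm (m - k) * SW gp k := by
  rw [Gd, ← Finset.sum_range_reflect]
  refine Finset.sum_congr rfl (fun k hk => ?_)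
  have hk' := Finset.mem_range.1 hk
  rw [show m + 1 - 1 - k = m - k by omega, Nat.sub_sub_self (by omega)]

lemma Gd_rec (m : ℕ) :
    PowerSeries.C (m : ℚ) * Gd m = ∑ r ∈ Finset.Icc 1 m, cinv r * Gd (m - r) := by
  have hsplit : PowerSeries.C (m : ℚ) * Gd m
      = (∑ k ∈ Finset.range (m+1), (PowerSeries.C (k:ℚ) * SW gm k) * SW gp (m-k))
        + ∑ k ∈ Finset.range (m+1), SW gm k * (PowerSeries.C ((m-k : ℕ):ℚ) * SW gp (m-k)) := by
    rw [Gd, Finset.mul_sum, ← Finset.sum_add_distrib]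
    refine Finset.sum_congr rfl (fun k hk => ?_)
    have hk' := Finset.mem_range.1 hk
    have : (m : ℚ) = (k : ℚ) + ((m - k : ℕ) : ℚ) := by
      have : k + (m - k) = m := by omega
      exact_mod_cast congrArg (Nat.cast (R := ℚ)) this.symm
    rw [this, map_add]
    ring
  rw [hsplit]
  have hT1 : (∑ k ∈ Finset.range (m+1), (PowerSeries.C (k:ℚ) * SW gm k) * SW gp (m-k))
      = ∑ r ∈ Finset.Icc 1 m, (PowerSeries.C ((2:ℚ))⁻¹ * gm r) * Gd (m - r) := by
    have h1 : ∀ k ∈ Finset.range (m+1), (PowerSeries.C (k:ℚ) * SW gm k) * SW gp (m-k)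
        = ∑ r ∈ Finset.Icc 1 k,
            (PowerSeries.C ((2:ℚ))⁻¹ * gm r * SW gm (k-r)) * SW gp (m - r - (k - r)) := by
      intro k hk
      have hk' := Finset.mem_range.1 hk
      rw [SW_rec, Finset.sum_mul]
      refine Finset.sum_congr rfl (fun r hr => ?_)
      obtain ⟨hr1, hr2⟩ := Finset.mem_Icc.1 hr
      rw [show m - r - (k - r) = m - k by omega]
    rw [Finset.sum_congr rfl h1,
      double_reindex (fun r j => (PowerSeries.C ((2:ℚ))⁻¹ * gm r * SW gm j) * SW gp (m - r - j)) m]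
    refine Finset.sum_congr rfl (fun r hr => ?_)
    obtain ⟨hr1, hr2⟩ := Finset.mem_Icc.1 hr
    rw [Gd, Finset.mul_sum]
    refine Finset.sum_congr rfl (fun j hj => ?_)
    have hj' := Finset.mem_range.1 hj
    rw [show m - r - j = m - r - j by rfl]
    have : m - r - j = m - r - j := rfl
    rw [show (m - r) - j = m - r - j by omega]
    ring
  have hT2 : (∑ k ∈ Finset.range (m+1), SW gm k * (PowerSeries.C ((m-k : ℕ):ℚ) * SW gp (m-k)))
      = ∑ r ∈ Finset.Icc 1 m, (PowerSeries.C ((2:ℚ))⁻¹ * gp r) * Gd (m - r) := by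
    rw [← Finset.sum_range_reflect]
    have h1 : ∀ k ∈ Finset.range (m+1),
        SW gm (m + 1 - 1 - k) * (PowerSeries.C ((m-(m + 1 - 1 - k) : ℕ):ℚ) * SW gp (m-(m + 1 - 1 - k)))
        = ∑ r ∈ Finset.Icc 1 k,
            (PowerSeries.C ((2:ℚ))⁻¹ * gp r * SW gp (k-r)) * SW gm (m - r - (k - r)) := by
      intro k hk
      have hk' := Finset.mem_range.1 hk
      rw [show m + 1 - 1 - k = m - k by omega, show m - (m - k) = k by omega]
      rw [SW_rec, Finset.mul_sum]
      refine Finset.sum_congr rfl (fun r hr => ?_)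
      obtain ⟨hr1, hr2⟩ := Finset.mem_Icc.1 hr
      rw [show m - r - (k - r) = m - k by omega]
      ring
    rw [Finset.sum_congr rfl h1,
      double_reindex (fun r j => (PowerSeries.C ((2:ℚ))⁻¹ * gp r * SW gp j) * SW gm (m - r - j)) m]
    refine Finset.sum_congr rfl (fun r hr => ?_)
    obtain ⟨hr1, hr2⟩ := Finset.mem_Icc.1 hr
    rw [Gd_reflect (m - r), Finset.mul_sum]
    refine Finset.sum_congr rfl (fun j hj => ?_)
    have hj' := Finset.mem_range.1 hj
    rw [show (m - r) - j = m - r - j by omega]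
    ring
  rw [hT1, hT2, ← Finset.sum_add_distrib]
  refine Finset.sum_congr rfl (fun r hr => ?_)
  obtain ⟨hr1, hr2⟩ := Finset.mem_Icc.1 hr
  have : PowerSeries.C ((2:ℚ))⁻¹ * gm r * Gd (m-r) + PowerSeries.C ((2:ℚ))⁻¹ * gp r * Gd (m-r)
      = PowerSeries.C ((2:ℚ))⁻¹ * ((gm r + gp r) * Gd (m-r)) := by ring
  rw [this, gm_add_gp r hr1]
  have h3 : PowerSeries.C ((2:ℚ))⁻¹ * PowerSeries.C (2:ℚ) = 1 := by
    rw [← map_mul]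
    norm_num
  have h2 : (2 : PowerSeries ℚ) = PowerSeries.C (2:ℚ) := by
    rw [map_ofNat]
  calc PowerSeries.C ((2:ℚ))⁻¹ * (2 * cinv r * Gd (m-r))
      = (PowerSeries.C ((2:ℚ))⁻¹ * 2) * (cinv r * Gd (m-r)) := by ring
    _ = cinv r * Gd (m - r) := by rw [h2, h3, one_mul]

lemma SW_zero (g : ℕ → PowerSeries ℚ) : SW g 0 = 1 := by
  rw [SW]
  rw [Finset.sum_eq_single_of_mem (default : Nat.Partition 0) (Finset.mem_univ _)
    (fun b _ hb => absurd (Subsingleton.elim b default) hb)]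
  rw [Nat.Partition.partition_zero_parts, vOf_zero, pm_zero]
  norm_num

lemma Gd_mul_Pq (m : ℕ) : Gd m * Pq 0 m = 1 := by
  induction m using Nat.strong_induction_on with
  | _ m ih =>
    match m with
    | 0 =>
        rw [Gd, Pq]
        simp [SW_zero]
    | (m+1) =>
        have hC : PowerSeries.C ((m+1 : ℕ) : ℚ) ≠ 0 := by
          intro h
          have := congrArg (constantCoeff) h
          rw [constantCoeff_C, map_zero] at this
          exact_mod_cast this
        apply mul_left_cancel₀ hC
        rw [mul_one, ← mul_assoc, Gd_rec, Finset.sum_mul]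
        rw [← qid (m+1)]
        refine Finset.sum_congr rfl (fun r hr => ?_)
        obtain ⟨hr1, hr2⟩ := Finset.mem_Icc.1 hr
        have hio : Pq 0 (m+1) = Pq 0 (m+1-r) * Pq (m+1-r) (m+1) := by
          rw [Pq, Pq, Pq, Finset.prod_Ioc_consecutive _ (by omega : 0 ≤ m+1-r) (by omega : m+1-r ≤ m+1)]
        rw [hio]
        calc cinv r * Gd (m+1-r) * (Pq 0 (m+1-r) * Pq (m+1-r) (m+1))
            = (Gd (m+1-r) * Pq 0 (m+1-r)) * (cinv r * Pq (m+1-r) (m+1)) := by ring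
          _ = cinv r * Pq (m+1-r) (m+1) := by rw [ih (m+1-r) (by omega), one_mul]

lemma binom_eq_zero {μ0 ν : Multiset ℕ} (h : ¬ μ0 ≤ ν) : binomOf ν μ0 = 0 := by
  rw [Multiset.le_iff_count] at h
  push_neg at h
  obtain ⟨r, hr⟩ := h
  have hrmem : r ∈ μ0.toFinset := by
    rw [Multiset.mem_toFinset, ← Multiset.count_pos]
    omega
  exact Finset.prod_eq_zero hrmem (Nat.choose_eq_zero_of_lt hr)

/-- subtract μ0 from a partition -/

def subPart {k : ℕ} (μ0 : Multiset ℕ) (ν : Nat.Partition k) (h : μ0 ≤ ν.parts) :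
    Nat.Partition (k - μ0.sum) where
  parts := ν.parts - μ0
  parts_pos := fun hx => ν.parts_pos (Multiset.mem_of_le (tsub_le_self) hx)
  parts_sum := by
    have h1 : μ0 + (ν.parts - μ0) = ν.parts := add_tsub_cancel_of_le h
    have h2 := ν.parts_sum
    rw [← h1, Multiset.sum_add] at h2
    omega

/-- add μ0 to a partition -/

def addPart {k : ℕ} (μ0 : Multiset ℕ) (hpos : ∀ x ∈ μ0, 0 < x) (hk : μ0.sum ≤ k)
    (ρ : Nat.Partition (k - μ0.sum)) : Nat.Partition k where
  parts := μ0 + ρ.parts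
  parts_pos := fun hx => by
    rcases Multiset.mem_add.1 hx with h | h
    · exact hpos _ h
    · exact ρ.parts_pos h
  parts_sum := by rw [Multiset.sum_add, ρ.parts_sum]; omega

lemma SB_eq (μ0 : Multiset ℕ) (hpos : ∀ x ∈ μ0, 0 < x) (g : ℕ → PowerSeries ℚ) (k : ℕ) :
    ∑ ν : Nat.Partition k,
      PowerSeries.C ((binomOf ν.parts μ0 : ℚ) / (vOf ν.parts : ℚ)) * pm g ν.parts
    = if μ0.sum ≤ k then
        PowerSeries.C ((vOf μ0 : ℚ)⁻¹) * pm g μ0 * SW g (k - μ0.sum) else 0 := by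
  classical
  have hvanish : ∀ ν : Nat.Partition k, ¬ μ0 ≤ ν.parts →
      PowerSeries.C ((binomOf ν.parts μ0 : ℚ) / (vOf ν.parts : ℚ)) * pm g ν.parts = 0 := by
    intro ν hν
    rw [binom_eq_zero hν]
    norm_num
  by_cases hk : μ0.sum ≤ k
  · rw [if_pos hk]
    rw [← Finset.sum_filter_of_ne (p := fun ν : Nat.Partition k => μ0 ≤ ν.parts)
      (fun ν _ hne => by
        by_contra hmem
        exact hne (hvanish ν hmem))]
    rw [SW, Finset.mul_sum]
    refine Finset.sum_bij' (fun ν hν => subPart μ0 ν (by simpa using hν))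
      (fun ρ _ => addPart μ0 hpos hk ρ) ?_ ?_ ?_ ?_ ?_
    · intro ν hν; exact Finset.mem_univ _
    · intro ρ hρ
      simp only [Finset.mem_filter, Finset.mem_univ, true_and, addPart]
      exact Multiset.le_add_right _ _
    · intro ν hν
      apply Nat.Partition.ext
      simp only [addPart, subPart]
      exact add_tsub_cancel_of_le (by simpa using hν)
    · intro ρ hρ
      apply Nat.Partition.ext
      simp only [addPart, subPart]
      exact add_tsub_cancel_left _ _
    · intro ν hν
      have hle : μ0 ≤ ν.parts := by simpa using hν
      set s := ν.parts - μ0 with hs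
      have hps : ν.parts = μ0 + s := (add_tsub_cancel_of_le hle).symm
      have hspos : ∀ x ∈ s, 0 < x :=
        fun x hx => ν.parts_pos (Multiset.mem_of_le tsub_le_self hx)
      have hvν : 0 < vOf ν.parts := vOf_pos _ (fun x hx => ν.parts_pos hx)
      have hvμ : 0 < vOf μ0 := vOf_pos _ hpos
      have hvs : 0 < vOf s := vOf_pos _ hspos
      have hkey : binomOf ν.parts μ0 * (vOf μ0 * vOf s) = vOf ν.parts := by
        rw [hps]; exact binom_mul_vOf μ0 s
      have hrat : (binomOf ν.parts μ0 : ℚ) / (vOf ν.parts : ℚ)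
          = (vOf μ0 : ℚ)⁻¹ * (vOf s : ℚ)⁻¹ := by
        have hb : 0 < binomOf ν.parts μ0 := by
          rcases Nat.eq_zero_or_pos (binomOf ν.parts μ0) with h0 | h0
          · rw [h0, zero_mul] at hkey; omega
          · exact h0
        rw [← hkey]
        push_cast
        have h1 : (binomOf ν.parts μ0 : ℚ) ≠ 0 := by positivity
        have h2 : (vOf μ0 : ℚ) ≠ 0 := by positivity
        have h3 : (vOf s : ℚ) ≠ 0 := by positivity
        field_simp
      rw [hrat, map_mul]
      simp only [subPart, ← hs]
      rw [hps, pm_add]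
      ring
  · rw [if_neg hk]
    refine Finset.sum_eq_zero (fun ν _ => ?_)
    refine hvanish ν (fun hle => hk ?_)
    obtain ⟨u, hu⟩ := Multiset.le_iff_exists_add.1 hle
    have h2 := ν.parts_sum
    rw [hu, Multiset.sum_add] at h2
    omega

lemma facMinus_eq (s : Multiset ℕ) : facMinus s = pm gm s :=
  (Finset.prod_multiset_map_count s gm).symm

lemma facPlus_eq (s : Multiset ℕ) : facPlus s = pm gp s :=
  (Finset.prod_multiset_map_count s gp).symm

lemma gSer_eq {A B : ℕ} (mu : Nat.Partition A) (lam : Nat.Partition B) (n : ℕ)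
    (h : A + B ≤ n) :
    gSer mu.parts lam.parts n
    = (PowerSeries.C ((vOf mu.parts : ℚ)⁻¹) * pm gm mu.parts)
      * (PowerSeries.C ((vOf lam.parts : ℚ)⁻¹) * pm gp lam.parts)
      * Gd (n - A - B) := by
  classical
  have hfac : gSer mu.parts lam.parts n
      = ∑ k ∈ Finset.range (n+1),
          (∑ ν : Nat.Partition k,
            PowerSeries.C ((binomOf ν.parts mu.parts : ℚ) / (vOf ν.parts : ℚ)) * pm gm ν.parts)
          * (∑ κ : Nat.Partition (n-k),
            PowerSeries.C ((binomOf κ.parts lam.parts : ℚ) / (vOf κ.parts : ℚ)) * pm gp κ.parts) := by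
    rw [gSer]
    refine Finset.sum_congr rfl (fun k _ => ?_)
    rw [Finset.sum_mul_sum]
    refine Finset.sum_congr rfl (fun ν _ => ?_)
    refine Finset.sum_congr rfl (fun κ _ => ?_)
    rw [mul_div_mul_comm, map_mul, facMinus_eq, facPlus_eq]
    ring
  rw [hfac]
  have hmu : mu.parts.sum = A := mu.parts_sum
  have hlam : lam.parts.sum = B := lam.parts_sum
  have hmupos : ∀ x ∈ mu.parts, 0 < x := fun x hx => mu.parts_pos hx
  have hlampos : ∀ x ∈ lam.parts, 0 < x := fun x hx => lam.parts_pos hx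
  have hstep : ∀ k ∈ Finset.range (n+1),
      (∑ ν : Nat.Partition k,
        PowerSeries.C ((binomOf ν.parts mu.parts : ℚ) / (vOf ν.parts : ℚ)) * pm gm ν.parts)
      * (∑ κ : Nat.Partition (n-k),
        PowerSeries.C ((binomOf κ.parts lam.parts : ℚ) / (vOf κ.parts : ℚ)) * pm gp κ.parts)
      = if A ≤ k ∧ k ≤ n - B then
          ((PowerSeries.C ((vOf mu.parts : ℚ)⁻¹) * pm gm mu.parts)
          * (PowerSeries.C ((vOf lam.parts : ℚ)⁻¹) * pm gp lam.parts))
          * (SW gm (k - A) * SW gp (n - k - B)) else 0 := by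
    intro k hk
    have hk' := Finset.mem_range.1 hk
    rw [SB_eq mu.parts hmupos gm k, SB_eq lam.parts hlampos gp (n-k), hmu, hlam]
    by_cases h1 : A ≤ k
    · by_cases h2 : k ≤ n - B
      · rw [if_pos h1, if_pos (by omega : B ≤ n - k), if_pos ⟨h1, h2⟩]
        ring
      · rw [if_pos h1, if_neg (by omega : ¬ B ≤ n - k), mul_zero,
          if_neg (fun hc : A ≤ k ∧ k ≤ n - B => h2 hc.2)]
    · rw [if_neg h1, zero_mul, if_neg (fun hc : A ≤ k ∧ k ≤ n - B => h1 hc.1)]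
  rw [Finset.sum_congr rfl hstep]
  rw [← Finset.sum_filter]
  have hfilt : (Finset.range (n+1)).filter (fun k => A ≤ k ∧ k ≤ n - B)
      = Finset.Ico A (n - B + 1) := by
    ext k
    simp only [Finset.mem_filter, Finset.mem_range, Finset.mem_Ico]
    omega
  rw [hfilt, Finset.sum_Ico_eq_sum_range]
  rw [show n - B + 1 - A = (n - A - B) + 1 by omega]
  rw [Gd, Finset.mul_sum]
  refine Finset.sum_congr rfl (fun j hj => ?_)
  have hj' := Finset.mem_range.1 hj
  rw [show A + j - A = j by omega, show n - (A + j) - B = n - A - B - j by omega]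

lemma prod_tail (i : ℕ) (s : Finset ℕ) (hs : ∀ k ∈ s, i + 1 ≤ 2 * k) :
    ∃ E : PowerSeries ℚ,
      ∏ k ∈ s, (1 - (PowerSeries.X : PowerSeries ℚ) ^ (2*k))
      = 1 + (PowerSeries.X : PowerSeries ℚ) ^ (i+1) * E := by
  classical
  induction s using Finset.induction with
  | empty => exact ⟨0, by simp⟩
  | insert a s ha ih =>
      obtain ⟨E, hE⟩ := ih (fun k hk => hs k (Finset.mem_insert_of_mem hk))
      have hXa : (PowerSeries.X : PowerSeries ℚ) ^ (2*a)
          = (PowerSeries.X : PowerSeries ℚ) ^ (i+1) * X ^ (2*a - (i+1)) := by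
        rw [← pow_add]
        congr 1
        have := hs a (Finset.mem_insert_self a s)
        omega
      refine ⟨E * (1 - X^(2*a)) - X^(2*a - (i+1)), ?_⟩
      rw [Finset.prod_insert ha, hE]
      rw [show (1 - (PowerSeries.X : PowerSeries ℚ)^(2*a)) * (1 + X^(i+1) * E)
          = 1 + X^(i+1) * E - X^(2*a) - X^(2*a) * (X^(i+1) * E) by ring, hXa]
      ring

lemma coeff_tail (i : ℕ) (F E : PowerSeries ℚ) :
    PowerSeries.coeff i (F * (1 + (PowerSeries.X : PowerSeries ℚ) ^ (i+1) * E))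
    = PowerSeries.coeff i F := by
  rw [mul_add, mul_one, map_add]
  have : F * ((PowerSeries.X : PowerSeries ℚ)^(i+1) * E) = X^(i+1) * (F * E) := by ring
  rw [this]
  have hdvd : (PowerSeries.X : PowerSeries ℚ)^(i+1) ∣ X^(i+1) * (F * E) := dvd_mul_right _ _
  rw [PowerSeries.X_pow_dvd_iff.1 hdvd i (by omega), add_zero]

/-- **Corollary 1.11**: for each `i` the sequence `n ↦ β_i(n)` is eventually constant
(in particular convergent), and the generating function of the stable values is
`(1/(v_μ v_λ)) ∏_{r≥1} (1-z^r)^{-n_r(μ)} ∏_{r≥1} (1+z^r)^{-n_r(λ)}`. -/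
theorem stable_twisted_betti_genfun (A B : ℕ) (mu : Nat.Partition A)
    (lam : Nat.Partition B) :
    ∃ b : ℕ → ℚ,
      (∀ i : ℕ, ∀ᶠ n in atTop, betaC mu.parts lam.parts i n = b i) ∧
      (PowerSeries.mk b
        = PowerSeries.C (1 / ((vOf mu.parts : ℚ) * (vOf lam.parts : ℚ))) *
            facMinus mu.parts * facPlus lam.parts) := by
  set R : PowerSeries ℚ := PowerSeries.C (1 / ((vOf mu.parts : ℚ) * (vOf lam.parts : ℚ))) *
      facMinus mu.parts * facPlus lam.parts with hR
  refine ⟨fun i => PowerSeries.coeff i R, ?_, ?_⟩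
  · intro i
    rw [Filter.eventually_atTop]
    refine ⟨A + B + i, fun n hn => ?_⟩
    set m := n - A - B with hm
    have hmn : A + B ≤ n := by omega
    have him : i ≤ m := by omega
    rw [betaC, gSer_eq mu lam n hmn]
    have hIcc : Finset.Icc 1 n = Finset.Ioc 0 n := by
      rw [← Finset.Icc_add_one_left_eq_Ioc]
      rfl
    have hPfull : ∏ k ∈ Finset.Icc 1 n, (1 - (PowerSeries.X : PowerSeries ℚ) ^ (2*k))
        = Pq 0 m * Pq m n := by
      rw [hIcc]
      rw [Pq, Pq, Finset.prod_Ioc_consecutive _ (by omega : 0 ≤ m) (by omega : m ≤ n)]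
    rw [hPfull]
    have hCC : (PowerSeries.C ((vOf mu.parts : ℚ)⁻¹) * pm gm mu.parts)
        * (PowerSeries.C ((vOf lam.parts : ℚ)⁻¹) * pm gp lam.parts) = R := by
      rw [hR, facMinus_eq, facPlus_eq, one_div, mul_inv, map_mul]
      ring
    have hre : (PowerSeries.C ((vOf mu.parts : ℚ)⁻¹) * pm gm mu.parts)
        * (PowerSeries.C ((vOf lam.parts : ℚ)⁻¹) * pm gp lam.parts)
        * Gd m * (Pq 0 m * Pq m n)
        = R * ((Gd m * Pq 0 m) * Pq m n) := by rw [← hCC]; ring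
    rw [hre, Gd_mul_Pq m, one_mul]
    obtain ⟨E, hE⟩ := prod_tail i (Finset.Ioc m n) (fun k hk => by
      have := (Finset.mem_Ioc.1 hk).1
      omega)
    rw [Pq, hE, coeff_tail]
  · ext i
    rw [PowerSeries.coeff_mk]
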